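/- Define t_max(y) = ⌊(y²−4)/3⌋ + 2 for integer y. Then for every integer y, t_max(y) ≡ y (mod 2), and for every integer y the function t ↦ |INF(y,t)| over integers t is maximized at t = t_max(y). -/

import Mathlib

/-- Heat kernel of the simple symmetric random walk on ℤ:
`H x t = 2^{-t} * choose t ((t+x)/2)` when `t ≥ 0`, `t ≡ x (mod 2)`, `|x| ≤ t`; else `0`. -/
noncomputable def H (x t : ℤ) : ℝ :=
  if 0 ≤ t ∧ (2 : ℤ) ∣ (t - x) ∧ |x| ≤ t then
    (2 : ℝ) ^ (-t) * (t.toNat.choose ((t + x) / 2).toNat)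
  else 0

/-- Influence of a deterministic right-step compared to a random step. -/
noncomputable def INF (y t : ℤ) : ℝ :=
  if t ≤ 0 then 0 else H (y + 1) (t - 1) - H y t

/-- `t_max y = ⌊(y² - 4)/3⌋ + 2`. -/
def tmax (y : ℤ) : ℤ := Int.fdiv (y ^ 2 - 4) 3 + 2

lemma choose_aux (n k : ℕ) (h : k ≤ n) :
    (n+1) * n.choose k = (n+1).choose k * (n+1-k) := by
  have h1 := Nat.add_one_mul_choose_eq n (n - k)
  rw [Nat.choose_symm h] at h1
  have h2 : n - k + 1 ≤ n + 1 := by omega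
  have h3 : (n+1) - (n - k + 1) = k := by omega
  rw [h1, ← h3, Nat.choose_symm h2, h3]
  congr 1
  omega

lemma INF_eq (y t : ℤ) (ht : 1 ≤ t) :
    INF y t = -((y : ℝ) / t) * H y t := by
  have htR : (0:ℝ) < (t:ℝ) := by exact_mod_cast ht.trans_lt' (by norm_num)
  rw [INF, if_neg (by omega : ¬ t ≤ 0)]
  by_cases hc : 0 ≤ t ∧ (2:ℤ) ∣ (t - y) ∧ |y| ≤ t
  · obtain ⟨-, hdvd, hle⟩ := hc
    rw [abs_le] at hle
    by_cases hyt : y = t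
    · subst hyt
      rw [H, H, if_neg, if_pos ⟨by omega, hdvd, by rw [abs_le]; omega⟩]
      · rw [show ((y + y)/2).toNat = y.toNat by omega, Nat.choose_self]
        push_cast
        rw [div_self (ne_of_gt htR)]
        ring
      · rintro ⟨-, -, habs⟩
        rw [abs_le] at habs
        omega
    · -- y < t, so y ≤ t - 2 by parity
      have hy2 : y ≤ t - 2 := by omega
      rw [H, H, if_pos ⟨by omega, by omega, by rw [abs_le]; omega⟩,
        if_pos ⟨by omega, hdvd, by rw [abs_le]; omega⟩]
      have harg : (t - 1 + (y + 1)) / 2 = (t + y) / 2 := by omega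
      rw [harg]
      set M : ℕ := ((t + y) / 2).toNat with hM
      set T : ℕ := t.toNat with hT
      have hTt : (T : ℤ) = t := Int.toNat_of_nonneg (by omega)
      have hMv : (M : ℤ) = (t + y) / 2 := Int.toNat_of_nonneg (by omega)
      have h2M : 2 * (M : ℤ) = t + y := by omega
      have hT1 : (t - 1).toNat = T - 1 := by omega
      have hMT : M ≤ T - 1 := by omega
      have hTpos : 1 ≤ T := by omega
      rw [hT1]
      have key := choose_aux (T - 1) M hMT
      rw [show T - 1 + 1 = T by omega] at key
      -- key : T * (T-1).choose M = T.choose M * (T - M)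
      have keyR : (t : ℝ) * ((T-1).choose M : ℝ) = (T.choose M : ℝ) * ((t:ℝ) - M) := by
        have := congrArg (fun n : ℕ => (n : ℝ)) key
        push_cast [Nat.cast_sub (by omega : M ≤ T)] at this
        have hTtR : (T:ℝ) = (t:ℝ) := by exact_mod_cast hTt
        rw [hTtR] at this
        exact_mod_cast this
      have hpow : (2:ℝ) ^ (-(t-1)) = (2:ℝ) ^ (-t) * 2 := by
        rw [show -(t-1) = -t + 1 by ring, zpow_add₀ (by norm_num : (2:ℝ) ≠ 0)]
        norm_num
      rw [hpow]
      have hyR : (2:ℝ) * (M:ℝ) = (t:ℝ) + (y:ℝ) := by exact_mod_cast h2M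
      field_simp
      linear_combination 2 * keyR - (T.choose M : ℝ) * hyR

  · have h1 : H y t = 0 := by rw [H, if_neg hc]
    have h2 : H (y+1) (t-1) = 0 := by
      rw [H, if_neg]
      rintro ⟨h0, hd2, habs2⟩
      rw [abs_le] at habs2
      exact hc ⟨by omega, by omega, by rw [abs_le]; omega⟩
    rw [h1, h2]
    ring

lemma choose_ratio (n k : ℕ) (h : k ≤ n) :
    (n+2).choose (k+1) * ((k+1) * (n-k+1)) = (n+1) * (n+2) * n.choose k := by
  have h1 := Nat.add_one_mul_choose_eq (n+1) k
  have h2 := choose_aux n k h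
  have h3 : n + 1 - k = n - k + 1 := by omega
  rw [h3] at h2
  calc (n+2).choose (k+1) * ((k+1) * (n-k+1)) = ((n+2).choose (k+1) * (k+1)) * (n-k+1) := by ring
    _ = ((n+2) * (n+1).choose k) * (n-k+1) := by rw [h1]
    _ = (n+2) * ((n+1).choose k * (n-k+1)) := by ring
    _ = (n+2) * ((n+1) * n.choose k) := by rw [h2]
    _ = (n+1) * (n+2) * n.choose k := by ring

lemma INF_abs (y t : ℤ) (ht : 1 ≤ t) (hle : |y| ≤ t) (hdvd : (2:ℤ) ∣ (t - y)) :
    |INF y t| = |(y:ℝ)| / t * ((2:ℝ)^(-t) * (t.toNat.choose ((t+y)/2).toNat)) := by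
  have htR : (0:ℝ) < (t:ℝ) := by exact_mod_cast ht.trans_lt' (by norm_num)
  rw [INF_eq y t ht, H, if_pos ⟨by omega, hdvd, hle⟩, abs_mul, abs_neg, abs_div,
    abs_of_pos htR,
    abs_of_nonneg (show (0:ℝ) ≤ (2:ℝ)^(-t) * (t.toNat.choose ((t+y)/2).toNat) by positivity)]

set_option maxHeartbeats 2000000 in
lemma step_facts (y t : ℤ) (ht : 1 ≤ t) (hle : |y| ≤ t) (hdvd : (2:ℤ) ∣ (t - y)) :
    ((y:ℤ)^2 ≤ 3*t + 3 → |INF y (t+2)| ≤ |INF y t|) ∧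
    (3*t + 4 ≤ y^2 → |INF y t| ≤ |INF y (t+2)|) := by
  have hleab := abs_le.mp hle
  have h1 := INF_abs y t ht hle hdvd
  have h2 := INF_abs y (t+2) (by omega) (by rw [abs_le]; omega) (by omega)
  set T := t.toNat with hT
  set M := ((t+y)/2).toNat with hM
  have hTt : (T:ℤ) = t := Int.toNat_of_nonneg (by omega)
  have hMv : 2*(M:ℤ) = t + y := by
    have : (M:ℤ) = (t+y)/2 := Int.toNat_of_nonneg (by omega)
    omega
  have hMT : M ≤ T := by omega
  have hT2 : (t+2).toNat = T + 2 := by omega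
  have harg : ((t+2+y)/2).toNat = M + 1 := by omega
  rw [hT2, harg] at h2
  have hTR : (T:ℝ) = (t:ℝ) := by exact_mod_cast hTt
  have hMR : 2*((M:ℕ):ℝ) = (t:ℝ) + (y:ℝ) := by exact_mod_cast hMv
  set c : ℝ := (T.choose M : ℝ) with hc0
  set c' : ℝ := ((T+2).choose (M+1) : ℝ) with hc0'
  set m : ℝ := (M:ℝ) with hm0
  have hc : 0 ≤ c := by positivity
  have key := choose_ratio T M hMT
  have keyR : c' * ((m+1) * ((t:ℝ)-m+1)) = ((t:ℝ)+1)*((t:ℝ)+2)*c := by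
    have h := congrArg (fun n : ℕ => (n : ℝ)) key
    simp only [Nat.cast_mul, Nat.cast_add, Nat.cast_ofNat, Nat.cast_one,
      Nat.cast_sub hMT] at h
    rw [hc0, hc0', hm0, ← hTR]
    push_cast
    push_cast at h
    linear_combination h
  have htR : (0:ℝ) < (t:ℝ) := by exact_mod_cast ht.trans_lt' (by norm_num)
  have hm1 : 0 ≤ m := by positivity
  have hm2 : m ≤ (t:ℝ) := by
    nlinarith [hMR, (show ((y:ℝ)) ≤ ((t:ℝ)) by exact_mod_cast hleab.2)]
  have hp : (0:ℝ) < (m+1) * ((t:ℝ)-m+1) := by nlinarith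
  have hyE : (y:ℝ) = 2*m - (t:ℝ) := by linarith [hMR]
  have hpow2 : (2:ℝ) ^ (-((t:ℤ)+2)) = (2:ℝ)^(-t) / 4 := by
    rw [show -((t:ℤ)+2) = -t + (-2) by ring, zpow_add₀ (by norm_num : (2:ℝ) ≠ 0)]
    norm_num
    ring
  have ht2R : (0:ℝ) < (t:ℝ) + 2 := by linarith
  have htne : ((t:ℝ)) ≠ 0 := ne_of_gt htR
  have ht2ne : ((t:ℝ)) + 2 ≠ 0 := ne_of_gt ht2R
  have hcast2 : ((t + 2 : ℤ) : ℝ) = (t:ℝ) + 2 := by push_cast; ring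
  rw [hcast2, hpow2] at h2
  have e1 : |(y:ℝ)| / ((t:ℝ)+2) * ((2:ℝ)^(-t)/4*c')
      = (|(y:ℝ)| * (2:ℝ)^(-t)/4) * (((t:ℝ)*c') * ((t:ℝ)⁻¹ * ((t:ℝ)+2)⁻¹)) := by
    field_simp
  have e2 : |(y:ℝ)| / (t:ℝ) * ((2:ℝ)^(-t)*c)
      = (|(y:ℝ)| * (2:ℝ)^(-t)/4) * ((4*((t:ℝ)+2)*c) * ((t:ℝ)⁻¹ * ((t:ℝ)+2)⁻¹)) := by
    field_simp
  constructor
  · intro hcond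
    have hcondR : ((y:ℝ))^2 ≤ 3*(t:ℝ) + 3 := by exact_mod_cast hcond
    have keyA : (t:ℝ) * c' ≤ 4 * ((t:ℝ)+2) * c := by
      have hbig : 0 ≤ ((t:ℝ)+2) * c * (3*(t:ℝ)+4 - (2*m-(t:ℝ))^2) := by
        apply mul_nonneg (mul_nonneg (by linarith) hc)
        rw [← hyE]; linarith
      apply le_of_mul_le_mul_right _ hp
      calc (t:ℝ)*c'*((m+1) * ((t:ℝ)-m+1)) = (t:ℝ)*(((t:ℝ)+1)*((t:ℝ)+2)*c) := by
            linear_combination (t:ℝ) * keyR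
        _ ≤ 4*((t:ℝ)+2)*c*((m+1) * ((t:ℝ)-m+1)) := by nlinarith [hbig]
    rw [h1, h2, e1, e2]
    apply mul_le_mul_of_nonneg_left _ (by positivity)
    exact mul_le_mul_of_nonneg_right keyA (by positivity)
  · intro hcond
    have hcondR : 3*(t:ℝ) + 4 ≤ ((y:ℝ))^2 := by exact_mod_cast hcond
    have keyA : 4 * ((t:ℝ)+2) * c ≤ (t:ℝ) * c' := by
      have hbig : 0 ≤ ((t:ℝ)+2) * c * ((2*m-(t:ℝ))^2 - (3*(t:ℝ)+4)) := by
        apply mul_nonneg (mul_nonneg (by linarith) hc)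
        rw [← hyE]; linarith
      apply le_of_mul_le_mul_right _ hp
      calc 4*((t:ℝ)+2)*c*((m+1) * ((t:ℝ)-m+1)) ≤ (t:ℝ)*(((t:ℝ)+1)*((t:ℝ)+2)*c) := by
            nlinarith [hbig]
        _ = (t:ℝ)*c'*((m+1) * ((t:ℝ)-m+1)) := by linear_combination (-(t:ℝ)) * keyR
    rw [h1, h2, e1, e2]
    apply mul_le_mul_of_nonneg_left _ (by positivity)
    exact mul_le_mul_of_nonneg_right keyA (by positivity)


lemma tmax_parity (y : ℤ) : (2:ℤ) ∣ (tmax y - y) := by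
  rw [tmax, Int.fdiv_eq_ediv_of_nonneg _ (by norm_num)]
  set r := y % 6 with hr
  have hr0 : 0 ≤ r := Int.emod_nonneg y (by norm_num)
  have hr5 : r < 6 := Int.emod_lt_of_pos y (by norm_num)
  obtain ⟨k, hk⟩ : ∃ k, y = 6*k + r := ⟨y/6, by omega⟩
  clear_value r
  obtain ⟨K, hK⟩ : ∃ K, y^2 - 4 = 12*K + r^2 - 4 := ⟨3*k^2 + k*r, by rw [hk]; ring⟩
  rw [hK]
  interval_cases r <;> norm_num <;> omega

lemma INF_vanish (y t : ℤ) (h : ¬(1 ≤ t ∧ |y| ≤ t ∧ (2:ℤ) ∣ (t - y))) : INF y t = 0 := by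
  by_cases ht : t ≤ 0
  · rw [INF, if_pos ht]
  · have ht1 : 1 ≤ t := by omega
    rw [INF_eq y t ht1, H, if_neg, mul_zero]
    rintro ⟨h0, hd, hle⟩
    exact h ⟨ht1, hle, hd⟩

theorem tmax_parity_and_max (y : ℤ) :
    (2 : ℤ) ∣ (tmax y - y) ∧ ∀ t : ℤ, |INF y t| ≤ |INF y (tmax y)| := by
  refine ⟨tmax_parity y, ?_⟩
  by_cases hy0 : y = 0
  · subst hy0
    have h0 : ∀ s : ℤ, INF 0 s = 0 := by
      intro s
      by_cases hs : s ≤ 0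
      · rw [INF, if_pos hs]
      · rw [INF_eq 0 s (by omega)]
        push_cast
        ring
    intro t
    rw [h0, h0]
  · have hay : 1 ≤ |y| := Int.one_le_abs (by omega)
    have htm : tmax y = (y^2-4)/3 + 2 := by rw [tmax, Int.fdiv_eq_ediv_of_nonneg _ (by norm_num)]
    set q : ℤ := (y^2-4)/3 with hq
    have hQ : ∀ A : ℤ, 3*(A/3) ≤ A ∧ A ≤ 3*(A/3)+2 := fun A => by omega
    have hq1 : 3*q ≤ y^2 - 4 := (hQ (y^2-4)).1
    have hq2 : y^2 - 4 ≤ 3*q + 2 := (hQ (y^2-4)).2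
    have hsq : 3*|y| - 2 ≤ y^2 := by
      have hnn : 0 ≤ (|y|-1)*(|y|-2) := by
        rcases lt_or_ge |y| 2 with h|h
        · have h1 : |y| = 1 := by omega
          rw [h1]; norm_num
        · apply mul_nonneg <;> omega
      nlinarith [sq_abs y]
    have hts : |y| ≤ q + 2 := by nlinarith
    have ht1 : 1 ≤ q + 2 := by linarith
    have hpar : (2:ℤ) ∣ (q + 2 - y) := by
      have := tmax_parity y
      rwa [htm] at this
    rw [htm]
    -- upward chain
    have hup : ∀ n : ℕ, ∀ s : ℤ, 1 ≤ s → |y| ≤ s → (2:ℤ) ∣ (s - y) → s + 2*(n:ℤ) = q + 2 →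
        |INF y s| ≤ |INF y (q+2)| := by
      intro n
      induction n with
      | zero =>
        intro s _ _ _ h
        rw [show s = q + 2 by omega]
      | succ n ih =>
        intro s h1 h2 h3 h
        have hsq3 : 3*s + 4 ≤ y^2 := by
          have hsle : s ≤ q := by push_cast at h; omega
          linarith
        have hstep := (step_facts y s h1 h2 h3).2 hsq3
        refine hstep.trans (ih (s+2) (by omega) (le_trans h2 (by omega)) (by omega) ?_)
        push_cast at h ⊢
        omega
    -- downward chain
    have hdn : ∀ n : ℕ, ∀ s : ℤ, s = q + 2 + 2*(n:ℤ) → |INF y s| ≤ |INF y (q+2)| := by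
      intro n
      induction n with
      | zero =>
        intro s h
        rw [show s = q + 2 by omega]
      | succ n ih =>
        intro s h
        have hs' : s - 2 = q + 2 + 2*(n:ℤ) := by push_cast at h; omega
        have hv1 : 1 ≤ s - 2 := by omega
        have hv2 : |y| ≤ s - 2 := by
          have : q + 2 ≤ s - 2 := by omega
          linarith
        have hv3 : (2:ℤ) ∣ (s - 2 - y) := by omega
        have hcond : y^2 ≤ 3*(s-2) + 3 := by
          have : q + 2 ≤ s - 2 := by omega
          linarith
        have hstep := (step_facts y (s-2) hv1 hv2 hv3).1 hcond
        rw [show s - 2 + 2 = s by ring] at hstep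
        exact hstep.trans (ih (s-2) hs')
    intro t
    by_cases hv : 1 ≤ t ∧ |y| ≤ t ∧ (2:ℤ) ∣ (t - y)
    · obtain ⟨hv1, hv2, hv3⟩ := hv
      rcases le_or_gt t (q+2) with hle | hlt
      · obtain ⟨n, hn⟩ : ∃ n : ℕ, t + 2*(n:ℤ) = q + 2 := by
          refine ⟨((q + 2 - t)/2).toNat, ?_⟩
          have : (2:ℤ) ∣ (q + 2 - t) := by omega
          rw [Int.toNat_of_nonneg (by omega)]
          omega
        exact hup n t hv1 hv2 hv3 hn
      · obtain ⟨n, hn⟩ : ∃ n : ℕ, t = q + 2 + 2*(n:ℤ) := by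
          refine ⟨((t - q - 2)/2).toNat, ?_⟩
          have : (2:ℤ) ∣ (t - q - 2) := by omega
          rw [Int.toNat_of_nonneg (by omega)]
          omega
        exact hdn n t hn
    · rw [INF_vanish y t hv, abs_zero]
      exact abs_nonneg _
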